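/- arXiv:2308.08133 — 3 statements merged into one kernel-verified Lean document; each statement's English description precedes it below -/
import Mathlib

section
/- Let D ⊆ ℝ³ be a bounded Lebesgue-measurable set and a ∈ ∂D a boundary point at which D satisfies the cone condition: there exist r > 0 and a nonempty relatively open subset S of the unit sphere such that a + V(r,S) ⊆ D, where V(r,S) = {t·v : 0 < t < r, v ∈ S}. Then the map x ↦ ∫_D 1/(16π²‖y−x‖⁴) dy (Lebesgue integral with values in [0,∞]) tends to ∞ as x → a in ℝ³; that is, the Dirichlet energy ∫_D ‖∇G(y−x)‖² dy of the fundamental solution with pole at x over D blows up as the pole approaches the boundary point a. -/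
open MeasureTheory Real Filter

open scoped ENNReal

noncomputable section

/-- Euclidean three-space. -/
abbrev E3 := EuclideanSpace ℝ (Fin 3)

/-- The finite cone with vertex at the origin determined by a radius `r` and a
set `S` of directions on the unit sphere: `{t • v : 0 < t < r, v ∈ S}`. -/
def coneV (r : ℝ) (S : Set E3) : Set E3 :=
  {z | ∃ t v, 0 < t ∧ t < r ∧ v ∈ S ∧ z = t • v}

set_option maxHeartbeats 1000000 in
/-- If `D ⊆ ℝ³` is a bounded Lebesgue-measurable set satisfying the cone
condition at a boundary point `a ∈ ∂D`, then the Dirichlet energy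
`∫_D ‖∇G(y−x)‖² dy = ∫_D 1/(16π²‖y−x‖⁴) dy` of the fundamental solution with
pole at `x` blows up as `x → a`.  This is the analytic core of part (c) of
Theorem 1 (formula (1.6)). -/
theorem energy_blowup_at_cone_boundary_point
    (D : Set E3) (hD : MeasurableSet D) (hDb : Bornology.IsBounded D)
    (a : E3) (haD : a ∈ frontier D)
    (r : ℝ) (hr : 0 < r) (S : Set E3)
    (hSsub : S ⊆ Metric.sphere (0 : E3) 1)
    (hSne : S.Nonempty)
    (hSopen : ∃ U : Set E3, IsOpen U ∧ S = U ∩ Metric.sphere (0 : E3) 1)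
    (hcone : (fun z => a + z) '' coneV r S ⊆ D) :
    Tendsto (fun x : E3 => ∫⁻ y in D, ENNReal.ofReal (1 / (16 * π ^ 2 * ‖y - x‖ ^ 4)))
      (nhds a) (nhds ⊤) := by
  obtain ⟨v, hvS⟩ := hSne
  obtain ⟨U, hUopen, hSU⟩ := hSopen
  have hvU : v ∈ U := by rw [hSU] at hvS; exact hvS.1
  have hv1 : ‖v‖ = 1 := mem_sphere_zero_iff_norm.mp (hSsub hvS)
  obtain ⟨ε, hε, hballU⟩ := Metric.isOpen_iff.mp hUopen v hvU
  set c : ℝ := min (ε / 3) (1 / 4) with hc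
  have hc0 : 0 < c := lt_min (by linarith) (by norm_num)
  have hc4 : c ≤ 1 / 4 := min_le_right _ _
  have hcε : c ≤ ε / 3 := min_le_left _ _
  clear_value c
  -- key geometric fact: small balls along the axis lie in the cone
  have hkey : ∀ t : ℝ, 0 < t → t ≤ r / 2 → Metric.ball (t • v) (c * t) ⊆ coneV r S := by
    intro t ht htr z hz
    rw [Metric.mem_ball, dist_eq_norm] at hz
    have htv : ‖t • v‖ = t := by rw [norm_smul, hv1, mul_one, Real.norm_eq_abs, abs_of_pos ht]
    have hct : c * t ≤ t / 4 := by nlinarith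
    have hl : t - c * t < ‖z‖ := by
      have h := norm_sub_norm_le (t • v) z
      rw [htv, norm_sub_rev] at h
      linarith
    have hz0 : 0 < ‖z‖ := by linarith
    have hzu : ‖z‖ < t + c * t := by
      have h := norm_sub_norm_le z (t • v)
      rw [htv] at h
      linarith
    have hzr : ‖z‖ < r := by linarith
    refine ⟨‖z‖, ‖z‖⁻¹ • z, hz0, hzr, ?_, (smul_inv_smul₀ hz0.ne' z).symm⟩
    have hw1 : ‖(‖z‖⁻¹ • z)‖ = 1 := by
      rw [norm_smul, Real.norm_eq_abs, abs_inv, abs_norm, inv_mul_cancel₀ hz0.ne']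
    have hts : |t - ‖z‖| ≤ ‖z - t • v‖ := by
      have h := abs_norm_sub_norm_le (t • v) z
      rwa [htv, norm_sub_rev] at h
    have hdist : ‖(‖z‖⁻¹ • z) - v‖ < ε := by
      have hzv : (‖z‖⁻¹ • z) - v = ‖z‖⁻¹ • (z - ‖z‖ • v) := by
        rw [smul_sub, smul_smul, inv_mul_cancel₀ hz0.ne', one_smul]
      rw [hzv, norm_smul, Real.norm_eq_abs, abs_inv, abs_norm]
      have hsplit : z - ‖z‖ • v = (z - t • v) + (t - ‖z‖) • v := by
        rw [sub_smul]; abel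
      have h2 : ‖z - ‖z‖ • v‖ ≤ ‖z - t • v‖ + |t - ‖z‖| := by
        rw [hsplit]
        refine (norm_add_le _ _).trans ?_
        rw [norm_smul, hv1, mul_one]
        exact le_refl _
      have h3 : ‖z - ‖z‖ • v‖ < 2 * (c * t) := by linarith [hts.trans hz.le]
      have h4 : ‖z‖⁻¹ ≤ (t - t / 4)⁻¹ := by
        apply inv_anti₀ (by linarith)
        linarith
      have h5 : ‖z‖⁻¹ * ‖z - ‖z‖ • v‖ ≤ (t - t / 4)⁻¹ * (2 * (c * t)) := by
        apply mul_le_mul h4 h3.le (norm_nonneg _) (inv_nonneg.mpr (by linarith))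
      have h6 : (t - t / 4)⁻¹ * (2 * (c * t)) = 8 * c / 3 := by
        have h34 : t - t / 4 = 3 * t / 4 := by ring
        rw [h34, inv_div, div_mul_eq_mul_div,
          div_eq_div_iff (by linarith : (0:ℝ) < 3 * t).ne' (by norm_num : (3:ℝ) ≠ 0)]
        ring
      rw [h6] at h5
      calc ‖z‖⁻¹ * ‖z - ‖z‖ • v‖ ≤ 8 * c / 3 := h5
        _ < ε := by linarith
    rw [hSU]
    exact ⟨hballU (by rwa [Metric.mem_ball, dist_eq_norm]),
      mem_sphere_zero_iff_norm.mpr hw1⟩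
  -- constants
  apply ENNReal.tendsto_nhds_top
  intro n
  set b : ℝ := (volume (Metric.ball (0 : E3) 1)).toReal with hb_def
  have hBpos : (0 : ℝ≥0∞) < volume (Metric.ball (0 : E3) 1) :=
    Metric.measure_ball_pos _ _ one_pos
  have hBfin : volume (Metric.ball (0 : E3) 1) < ⊤ := measure_ball_lt_top
  have hb : 0 < b := ENNReal.toReal_pos hBpos.ne' hBfin.ne
  have hπ : 0 < π := Real.pi_pos
  set K : ℝ := b * c ^ 3 / (1296 * π ^ 2) with hK_def
  have hK : 0 < K := by positivity
  set t : ℝ := min (r / 2) (K / (n + 1)) with ht_def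
  have ht0 : 0 < t := lt_min (by linarith) (by positivity)
  have htr : t ≤ r / 2 := min_le_left _ _
  have htK : t ≤ K / (n + 1) := min_le_right _ _
  clear_value b K t
  have hct : c * t ≤ t / 4 := by nlinarith
  filter_upwards [Metric.ball_mem_nhds a (show (0:ℝ) < t / 4 by linarith)] with x hx
  rw [Metric.mem_ball, dist_eq_norm] at hx
  set p : E3 := a + t • v with hp_def
  set ρ : ℝ := c * t with hρ_def
  have hρ0 : 0 < ρ := mul_pos hc0 ht0
  clear_value p ρ
  have htv : ‖t • v‖ = t := by rw [norm_smul, hv1, mul_one, Real.norm_eq_abs, abs_of_pos ht0]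
  -- the ball lies inside D
  have hballD : Metric.ball p ρ ⊆ D := by
    intro y hy
    rw [Metric.mem_ball, dist_eq_norm] at hy
    have h1 : y - a ∈ Metric.ball (t • v) (c * t) := by
      rw [Metric.mem_ball, dist_eq_norm]
      have : y - a - t • v = y - p := by rw [hp_def]; abel
      rw [this, ← hρ_def]
      exact hy
    have h2 : a + (y - a) ∈ D := hcone ⟨y - a, hkey t ht0 htr h1, rfl⟩
    simpa using h2
  -- x is not in the ball
  have hxnot : x ∉ Metric.ball p ρ := by
    intro h
    rw [Metric.mem_ball, dist_eq_norm] at h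
    have hpa : ‖p - a‖ = t := by rw [hp_def]; simpa using htv
    have : ‖p - a‖ ≤ ‖x - p‖ + ‖x - a‖ := by
      calc ‖p - a‖ = ‖(x - a) - (x - p)‖ := by congr 1; abel
        _ ≤ ‖x - a‖ + ‖x - p‖ := norm_sub_le _ _
        _ = ‖x - p‖ + ‖x - a‖ := by ring
    rw [hpa] at this
    have : t < ρ + t / 4 := by linarith
    rw [hρ_def] at this
    linarith
  -- pointwise lower bound on the ball
  have hpt : ∀ y ∈ Metric.ball p ρ,
      ENNReal.ofReal (1 / (16 * π ^ 2 * (3 * t) ^ 4))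
        ≤ ENNReal.ofReal (1 / (16 * π ^ 2 * ‖y - x‖ ^ 4)) := by
    intro y hy
    have hyx0 : 0 < ‖y - x‖ := by
      rw [norm_pos_iff, sub_ne_zero]
      intro h; exact hxnot (h ▸ hy)
    rw [Metric.mem_ball, dist_eq_norm] at hy
    have hyx : ‖y - x‖ ≤ 3 * t := by
      have h1 : ‖y - x‖ ≤ ‖y - p‖ + ‖p - a‖ + ‖a - x‖ := by
        calc ‖y - x‖ = ‖(y - p) + (p - a) + (a - x)‖ := by congr 1; abel
          _ ≤ ‖(y - p) + (p - a)‖ + ‖a - x‖ := norm_add_le _ _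
          _ ≤ ‖y - p‖ + ‖p - a‖ + ‖a - x‖ := by
              linarith [norm_add_le (y - p) (p - a)]
      have hpa : ‖p - a‖ = t := by rw [hp_def]; simpa using htv
      have hax : ‖a - x‖ = ‖x - a‖ := norm_sub_rev _ _
      rw [hpa, hax] at h1
      have := hct
      linarith
    apply ENNReal.ofReal_le_ofReal
    apply one_div_le_one_div_of_le (by positivity)
    have h4 : ‖y - x‖ ^ 4 ≤ (3 * t) ^ 4 :=
      pow_le_pow_left₀ (norm_nonneg _) hyx 4
    nlinarith [sq_nonneg π]
  -- assemble the bound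
  have hKt : (n : ℝ) < K / t := by
    rw [lt_div_iff₀ ht0]
    have h1 : (n : ℝ) * t ≤ (n : ℝ) * (K / (n + 1)) :=
      mul_le_mul_of_nonneg_left htK (Nat.cast_nonneg n)
    have h2 : (n : ℝ) * (K / (n + 1)) < K := by
      rw [mul_div_assoc', div_lt_iff₀ (by positivity : (0:ℝ) < (n:ℝ) + 1)]
      nlinarith
    linarith
  have hval : 1 / (16 * π ^ 2 * (3 * t) ^ 4) * (ρ ^ 3 * b) = K / t := by
    have hA : (0:ℝ) < 16 * π ^ 2 * (3 * t) ^ 4 :=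
      mul_pos (by positivity) (pow_pos (by linarith) 4)
    have hB : (0:ℝ) < 1296 * π ^ 2 * t := mul_pos (by positivity) ht0
    rw [hρ_def, hK_def, one_div_mul_eq_div, div_div,
      div_eq_div_iff hA.ne' hB.ne']
    ring
  calc (n : ℝ≥0∞) = ENNReal.ofReal (n : ℝ) := (ENNReal.ofReal_natCast n).symm
    _ < ENNReal.ofReal (1 / (16 * π ^ 2 * (3 * t) ^ 4) * (ρ ^ 3 * b)) := by
        rw [ENNReal.ofReal_lt_ofReal_iff (by rw [hval]; exact (Nat.cast_nonneg n).trans_lt hKt)]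
        rw [hval]; exact hKt
    _ = ENNReal.ofReal (1 / (16 * π ^ 2 * (3 * t) ^ 4)) *
          (ENNReal.ofReal (ρ ^ 3) * volume (Metric.ball (0 : E3) 1)) := by
        have h1 : (0:ℝ) ≤ 1 / (16 * π ^ 2 * (3 * t) ^ 4) :=
          le_of_lt (by
            apply div_pos one_pos
            exact mul_pos (by positivity) (pow_pos (by linarith) 4))
        rw [ENNReal.ofReal_mul h1, ENNReal.ofReal_mul (pow_nonneg hρ0.le 3),
          hb_def, ENNReal.ofReal_toReal hBfin.ne]
    _ = ENNReal.ofReal (1 / (16 * π ^ 2 * (3 * t) ^ 4)) * volume (Metric.ball p ρ) := by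
        rw [Measure.addHaar_ball volume p hρ0.le]
        norm_num
    _ = ∫⁻ _ in Metric.ball p ρ, ENNReal.ofReal (1 / (16 * π ^ 2 * (3 * t) ^ 4)) := by
        rw [setLIntegral_const]
    _ ≤ ∫⁻ y in Metric.ball p ρ, ENNReal.ofReal (1 / (16 * π ^ 2 * ‖y - x‖ ^ 4)) :=
        setLIntegral_mono' measurableSet_ball hpt
    _ ≤ ∫⁻ y in D, ENNReal.ofReal (1 / (16 * π ^ 2 * ‖y - x‖ ^ 4)) :=
        lintegral_mono_set hballD
end
end

section
/- Let Ω ⊆ ℝ³ be a bounded open set and b ∈ ∂Ω a boundary point at which the exterior E = ℝ³ \ closure(Ω) satisfies the cone condition: there exist r > 0 and a nonempty relatively open subset S of the unit sphere such that b + V(r,S) ⊆ ℝ³ \ closure(Ω), where V(r,S) = {t·v : 0 < t < r, v ∈ S}. Then the map x ↦ ∫_{ℝ³ \ closure(Ω)} 1/(16π²‖y−x‖⁴) dy (Lebesgue integral with values in [0,∞]) tends to ∞ as x → b in ℝ³; that is, the exterior Dirichlet energy ∫_{ℝ³ \ closure(Ω)} ‖∇G(y−x)‖² dy blows up as x approaches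 b. -/
open MeasureTheory Real Filter Pointwise
open scoped ENNReal NNReal

noncomputable section

lemma mem_coneV_iff {r : ℝ} {S : Set E3} (hSsub : S ⊆ Metric.sphere (0 : E3) 1) {z : E3} :
    z ∈ coneV r S ↔ 0 < ‖z‖ ∧ ‖z‖ < r ∧ ‖z‖⁻¹ • z ∈ S := by
  constructor
  · rintro ⟨t, v, ht0, htr, hv, rfl⟩
    have hv1 : ‖v‖ = 1 := mem_sphere_zero_iff_norm.mp (hSsub hv)
    have hz : ‖t • v‖ = t := by rw [norm_smul, hv1, Real.norm_eq_abs, abs_of_pos ht0, mul_one]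
    refine ⟨by rw [hz]; exact ht0, by rw [hz]; exact htr, ?_⟩
    rw [hz, smul_smul, inv_mul_cancel₀ ht0.ne', one_smul]
    exact hv
  · rintro ⟨h0, hr, hS⟩
    exact ⟨‖z‖, ‖z‖⁻¹ • z, h0, hr, hS, by rw [smul_smul, mul_inv_cancel₀ h0.ne', one_smul]⟩

lemma isOpen_coneV {r : ℝ} {S : Set E3} (hSsub : S ⊆ Metric.sphere (0 : E3) 1)
    (hSopen : ∃ U : Set E3, IsOpen U ∧ S = U ∩ Metric.sphere (0 : E3) 1) :
    IsOpen (coneV r S) := by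
  obtain ⟨U, hU, hUS⟩ := hSopen
  have heq : coneV r S = ({z : E3 | z ≠ 0} ∩ Metric.ball 0 r) ∩ (fun z : E3 => ‖z‖⁻¹ • z) ⁻¹' U := by
    ext z
    rw [mem_coneV_iff hSsub]
    constructor
    · rintro ⟨h0, hr, hS⟩
      refine ⟨⟨norm_pos_iff.mp h0, mem_ball_zero_iff.mpr hr⟩, ?_⟩
      rw [hUS] at hS
      exact hS.1
    · rintro ⟨⟨h0, hr⟩, hu⟩
      have h0' : 0 < ‖z‖ := norm_pos_iff.mpr h0
      refine ⟨h0', mem_ball_zero_iff.mp hr, ?_⟩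
      rw [hUS]
      refine ⟨hu, ?_⟩
      rw [mem_sphere_zero_iff_norm, norm_smul, norm_inv, norm_norm, inv_mul_cancel₀ h0'.ne']
  rw [heq]
  refine ContinuousOn.isOpen_inter_preimage ?_ ((isOpen_ne).inter Metric.isOpen_ball) hU
  exact ((continuous_norm.continuousOn.inv₀ fun z hz =>
    norm_ne_zero_iff.mpr hz.1).smul continuousOn_id)

lemma smul_coneV {c : ℝ} (hc : 0 < c) (r : ℝ) (S : Set E3) :
    c • coneV r S = coneV (c * r) S := by
  ext z
  constructor
  · rintro ⟨w, ⟨t, v, ht0, htr, hv, rfl⟩, rfl⟩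
    exact ⟨c * t, v, mul_pos hc ht0, (mul_lt_mul_iff_right₀ hc).mpr htr, hv, by simp [smul_smul]⟩
  · rintro ⟨t, v, ht0, htr, hv, rfl⟩
    refine ⟨(c⁻¹ * t) • v, ⟨c⁻¹ * t, v, mul_pos (inv_pos.mpr hc) ht0, ?_, hv, rfl⟩, ?_⟩
    · have := (mul_lt_mul_iff_right₀ (inv_pos.mpr hc)).mpr htr
      rwa [inv_mul_cancel_left₀ hc.ne'] at this
    · show c • ((c⁻¹ * t) • v) = t • v
      rw [smul_smul, mul_inv_cancel_left₀ hc.ne']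

lemma lintegral_image_add_eq (b : E3) {C : Set E3} (hC : MeasurableSet C) (g : E3 → ℝ≥0∞) :
    ∫⁻ y in (fun z => b + z) '' C, g (y - b) = ∫⁻ z in C, g z := by
  have himg : (fun z => b + z) '' C = (fun y : E3 => y - b) ⁻¹' C := by
    ext y
    constructor
    · rintro ⟨z, hz, rfl⟩
      simpa [add_sub_cancel_left] using hz
    · intro hy
      exact ⟨y - b, hy, by simp⟩
  have hCm : MeasurableSet ((fun y : E3 => y - b) ⁻¹' C) :=
    (measurable_id.sub measurable_const) hC
  rw [himg, ← lintegral_indicator hCm, ← lintegral_indicator hC]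
  rw [← lintegral_add_left_eq_self
    (fun y => ((fun y : E3 => y - b) ⁻¹' C).indicator (fun y => g (y - b)) y) b]
  congr 1
  funext z
  by_cases hz : z ∈ C <;>
    simp [Set.indicator, Set.mem_preimage, add_sub_cancel_left, hz]
lemma lintegral_coneV_eq_top {r : ℝ} (hr : 0 < r) {S : Set E3}
    (hSsub : S ⊆ Metric.sphere (0 : E3) 1) (hSne : S.Nonempty)
    (hSopen : ∃ U : Set E3, IsOpen U ∧ S = U ∩ Metric.sphere (0 : E3) 1) :
    ∫⁻ z in coneV r S, ENNReal.ofReal (1 / (16 * π ^ 2 * ‖z‖ ^ 4)) = ⊤ := by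
  have hopen : IsOpen (coneV r S) := isOpen_coneV hSsub hSopen
  have hne : (coneV r S).Nonempty := by
    obtain ⟨v, hv⟩ := hSne
    exact ⟨(r/2) • v, r/2, v, half_pos hr, half_lt_self hr, hv, rfl⟩
  have hm : 0 < volume (coneV r S) := hopen.measure_pos volume hne
  set m := volume (coneV r S) with hmdef
  set I := ∫⁻ z in coneV r S, ENNReal.ofReal (1 / (16 * π ^ 2 * ‖z‖ ^ 4)) with hI
  have hπ0 : π ≠ 0 := pi_ne_zero
  have hr0 : r ≠ 0 := hr.ne'
  have key : ∀ k : ℕ, ENNReal.ofReal (((k : ℝ) + 1) / (16 * π ^ 2 * r ^ 4)) * m ≤ I := by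
    intro k
    have hk0 : ((k : ℝ) + 1) ≠ 0 := by positivity
    set c : ℝ := ((k : ℝ) + 1)⁻¹ with hcdef
    have hc : 0 < c := by positivity
    set a : ℝ := c * r with hadef
    have ha : 0 < a := mul_pos hc hr
    have hk1 : (1 : ℝ) ≤ (k : ℝ) + 1 := by
      have h : (0:ℝ) ≤ (k:ℝ) := Nat.cast_nonneg k
      linarith
    have hck : c * ((k : ℝ) + 1) = 1 := inv_mul_cancel₀ hk0
    have hc1 : c ≤ 1 := by nlinarith
    have har : a ≤ r := by
      calc a = c * r := hadef
        _ ≤ 1 * r := by nlinarith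
        _ = r := one_mul r
    have hvol : volume (coneV a S) = ENNReal.ofReal (c ^ 3) * m := by
      rw [hadef, ← smul_coneV hc r S,
        MeasureTheory.Measure.addHaar_smul_of_nonneg volume hc.le (coneV r S)]
      simp [finrank_euclideanSpace_fin]
      rfl
    have hsub : coneV a S ⊆ coneV r S := by
      rintro z ⟨t, v, h1, h2, h3, h4⟩
      exact ⟨t, v, h1, lt_of_lt_of_le h2 har, h3, h4⟩
    calc ENNReal.ofReal (((k : ℝ) + 1) / (16 * π ^ 2 * r ^ 4)) * m
        = ENNReal.ofReal (1 / (16 * π ^ 2 * a ^ 4)) * (ENNReal.ofReal (c ^ 3) * m) := by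
          rw [← mul_assoc, ← ENNReal.ofReal_mul (by positivity)]
          congr 2
          rw [hadef, hcdef]
          field_simp
      _ = ENNReal.ofReal (1 / (16 * π ^ 2 * a ^ 4)) * volume (coneV a S) := by rw [hvol]
      _ = ∫⁻ _ in coneV a S, ENNReal.ofReal (1 / (16 * π ^ 2 * a ^ 4)) :=
          (setLIntegral_const _ _).symm
      _ ≤ ∫⁻ z in coneV a S, ENNReal.ofReal (1 / (16 * π ^ 2 * ‖z‖ ^ 4)) := by
          refine setLIntegral_mono' (isOpen_coneV hSsub hSopen).measurableSet fun z hz => ?_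
          obtain ⟨h0, hza, -⟩ := (mem_coneV_iff hSsub).mp hz
          apply ENNReal.ofReal_le_ofReal
          apply one_div_le_one_div_of_le (by positivity)
          have hp4 : ‖z‖ ^ 4 ≤ a ^ 4 := pow_le_pow_left₀ (norm_nonneg z) hza.le 4
          nlinarith [sq_nonneg π]
      _ ≤ I := lintegral_mono_set hsub
  have htend : Tendsto
      (fun k : ℕ => ENNReal.ofReal (((k : ℝ) + 1) / (16 * π ^ 2 * r ^ 4)) * m) atTop (nhds ⊤) := by
    have h0 : Tendsto (fun k : ℕ => ((k : ℝ) + 1) / (16 * π ^ 2 * r ^ 4)) atTop atTop :=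
      Tendsto.atTop_div_const (by positivity)
        (tendsto_atTop_add_const_right _ 1 tendsto_natCast_atTop_atTop)
    have h1 := ENNReal.tendsto_ofReal_atTop.comp h0
    have h2 := ENNReal.Tendsto.mul_const (b := m) h1 (Or.inl ENNReal.top_ne_zero)
    rwa [ENNReal.top_mul hm.ne'] at h2
  exact top_unique (le_of_tendsto' htend key)

/-- If `Ω ⊆ ℝ³` is a bounded open set whose exterior `ℝ³ \ closure Ω` satisfies
the cone condition at a boundary point `b ∈ ∂Ω`, then the exterior Dirichlet
energy `∫_{ℝ³ \ closure Ω} ‖∇G(y−x)‖² dy = ∫_{ℝ³ \ closure Ω} 1/(16π²‖y−x‖⁴) dy`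
blows up as `x → b`.  This is formula (1.26) of the paper. -/
theorem exterior_energy_blowup_at_boundary
    (Ω : Set E3) (hΩopen : IsOpen Ω) (hΩb : Bornology.IsBounded Ω)
    (b : E3) (hb : b ∈ frontier Ω)
    (r : ℝ) (hr : 0 < r) (S : Set E3)
    (hSsub : S ⊆ Metric.sphere (0 : E3) 1)
    (hSne : S.Nonempty)
    (hSopen : ∃ U : Set E3, IsOpen U ∧ S = U ∩ Metric.sphere (0 : E3) 1)
    (hcone : (fun z => b + z) '' coneV r S ⊆ (closure Ω)ᶜ) :
    Tendsto
      (fun x : E3 => ∫⁻ y in (closure Ω)ᶜ,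
        ENNReal.ofReal (1 / (16 * π ^ 2 * ‖y - x‖ ^ 4)))
      (nhds b) (nhds ⊤) := by
  have hCopen : IsOpen (coneV r S) := isOpen_coneV hSsub hSopen
  have htop : ∫⁻ y in (closure Ω)ᶜ, ENNReal.ofReal (1 / (16 * π ^ 2 * ‖y - b‖ ^ 4)) = ⊤ := by
    have h1 := lintegral_coneV_eq_top hr hSsub hSne hSopen
    have h2 : ∫⁻ y in (fun z => b + z) '' coneV r S,
        ENNReal.ofReal (1 / (16 * π ^ 2 * ‖y - b‖ ^ 4)) = ⊤ := by
      rw [lintegral_image_add_eq b hCopen.measurableSet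
        (fun z => ENNReal.ofReal (1 / (16 * π ^ 2 * ‖z‖ ^ 4)))]
      exact h1
    exact top_unique (h2 ▸ lintegral_mono_set hcone)
  rw [tendsto_iff_seq_tendsto]
  intro u hu
  show Tendsto (fun n : ℕ => ∫⁻ y in (closure Ω)ᶜ,
    ENNReal.ofReal (1 / (16 * π ^ 2 * ‖y - u n‖ ^ 4))) atTop (nhds ⊤)
  have hmeas : ∀ x : E3,
      Measurable fun y : E3 => ENNReal.ofReal (1 / (16 * π ^ 2 * ‖y - x‖ ^ 4)) := by
    intro x
    apply ENNReal.measurable_ofReal.comp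
    exact Measurable.div measurable_const (by fun_prop)
  have hae : ∀ᵐ y ∂(volume.restrict (closure Ω)ᶜ),
      ENNReal.ofReal (1 / (16 * π ^ 2 * ‖y - b‖ ^ 4)) ≤
        liminf (fun n => ENNReal.ofReal (1 / (16 * π ^ 2 * ‖y - u n‖ ^ 4))) atTop := by
    have hne : ∀ᵐ y : E3 ∂volume, y ≠ b := by
      rw [ae_iff]
      convert measure_singleton b using 2
      · ext y; simp
      · infer_instance
    filter_upwards [ae_restrict_of_ae hne] with y hy
    have h0 : 0 < ‖y - b‖ := norm_pos_iff.mpr (sub_ne_zero.mpr hy)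
    have hden : (0:ℝ) < 16 * π ^ 2 * ‖y - b‖ ^ 4 := by positivity
    have hcont : ContinuousAt (fun x : E3 => 1 / (16 * π ^ 2 * ‖y - x‖ ^ 4)) b :=
      ContinuousAt.div continuousAt_const (by fun_prop) hden.ne'
    have htt : Tendsto (fun n => ENNReal.ofReal (1 / (16 * π ^ 2 * ‖y - u n‖ ^ 4))) atTop
        (nhds (ENNReal.ofReal (1 / (16 * π ^ 2 * ‖y - b‖ ^ 4)))) :=
      ENNReal.continuous_ofReal.continuousAt.tendsto.comp (hcont.tendsto.comp hu)
    rw [htt.liminf_eq]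
  have hliminf : liminf (fun n => ∫⁻ y in (closure Ω)ᶜ,
      ENNReal.ofReal (1 / (16 * π ^ 2 * ‖y - u n‖ ^ 4))) atTop = ⊤ := by
    apply top_unique
    calc (⊤ : ℝ≥0∞)
        = ∫⁻ y in (closure Ω)ᶜ, ENNReal.ofReal (1 / (16 * π ^ 2 * ‖y - b‖ ^ 4)) := htop.symm
      _ ≤ ∫⁻ y in (closure Ω)ᶜ,
            liminf (fun n => ENNReal.ofReal (1 / (16 * π ^ 2 * ‖y - u n‖ ^ 4))) atTop :=
          lintegral_mono_ae hae
      _ ≤ liminf (fun n => ∫⁻ y in (closure Ω)ᶜ,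
            ENNReal.ofReal (1 / (16 * π ^ 2 * ‖y - u n‖ ^ 4))) atTop :=
          lintegral_liminf_le fun n => hmeas (u n)
  exact tendsto_of_liminf_eq_limsup hliminf (top_unique (hliminf ▸ liminf_le_limsup))
end
end

section
/- Let D ⊆ ℝ³ be a bounded Lebesgue-measurable set satisfying the cone condition at a point a ∈ ∂D: there exist r > 0 and a nonempty relatively open subset S of the unit sphere such that a + V(r,S) ⊆ D, where V(r,S) = {t·v : 0 < t < r, v ∈ S}. For x ∈ ℝ³ \ closure(D) put A(x) = ∫_D 1/(16π²‖y−x‖⁴) dy and B(x) = ∫_D 1/(16π²‖y−x‖²) dy (both finite nonnegative reals for such x). Then for every sequence (xₙ) in ℝ³ \ closure(D) with xₙ → a, the quotient A(xₙ)/√(A(xₙ) + B(xₙ)) tends to ∞. -/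
open MeasureTheory Real Filter
open Pointwise

noncomputable section

private lemma aux_integrableOn (D : Set E3) (hD : MeasurableSet D)
    (hDb : Bornology.IsBounded D) (hne : D.Nonempty)
    (w : E3) (hw : w ∉ closure D) (p : ℕ) :
    IntegrableOn (fun y : E3 => 1 / (16 * π ^ 2 * ‖y - w‖ ^ p)) D := by
  have hd : 0 < Metric.infDist w D := by
    rw [← Metric.infDist_closure] at *
    exact (isClosed_closure.notMem_iff_infDist_pos hne.closure).1 hw
  apply Measure.integrableOn_of_bounded hDb.measure_lt_top.ne
    (by fun_prop : Measurable _).aestronglyMeasurable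
  · filter_upwards [ae_restrict_mem hD] with y hy
    have h1 : Metric.infDist w D ≤ ‖y - w‖ := by
      rw [show ‖y - w‖ = dist w y by rw [dist_eq_norm, norm_sub_rev]]
      exact Metric.infDist_le_dist_of_mem hy
    have h2 : Metric.infDist w D ^ p ≤ ‖y - w‖ ^ p := pow_le_pow_left₀ hd.le h1 p
    rw [Real.norm_eq_abs, abs_of_nonneg (by positivity)]
    exact one_div_le_one_div_of_le (by positivity)
      (mul_le_mul_of_nonneg_left h2 (by positivity))

/-- Let `D ⊆ ℝ³` be a bounded measurable set satisfying the cone condition at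
`a ∈ ∂D`.  For `x ∉ closure D` put `A(x) = ∫_D 1/(16π²‖y−x‖⁴) dy`
(`= ‖∇G(·−x)‖²_{L²(D)}`) and `B(x) = ∫_D 1/(16π²‖y−x‖²) dy`
(`= ‖G(·−x)‖²_{L²(D)}`).  Then along every sequence `xₙ ∉ closure D` with
`xₙ → a`, the quotient `A(xₙ)/√(A(xₙ)+B(xₙ))
 = ‖∇G(·−xₙ)‖²_{L²(D)} / ‖G(·−xₙ)‖_{H¹(D)}` tends to `∞` (Remark 2.1). -/
theorem gradient_over_H1_quotient_blowup
    (D : Set E3) (hD : MeasurableSet D) (hDb : Bornology.IsBounded D)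
    (a : E3) (haD : a ∈ frontier D)
    (r : ℝ) (hr : 0 < r) (S : Set E3)
    (hSsub : S ⊆ Metric.sphere (0 : E3) 1)
    (hSne : S.Nonempty)
    (hSopen : ∃ U : Set E3, IsOpen U ∧ S = U ∩ Metric.sphere (0 : E3) 1)
    (hcone : (fun z => a + z) '' coneV r S ⊆ D)
    (A B : E3 → ℝ)
    (hA : ∀ x : E3, A x = ∫ y in D, 1 / (16 * π ^ 2 * ‖y - x‖ ^ 4))
    (hB : ∀ x : E3, B x = ∫ y in D, 1 / (16 * π ^ 2 * ‖y - x‖ ^ 2))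
    (x : ℕ → E3) (hx : ∀ n, x n ∈ (closure D)ᶜ)
    (hxa : Tendsto x atTop (nhds a)) :
    Tendsto (fun n => A (x n) / Real.sqrt (A (x n) + B (x n))) atTop atTop := by
  obtain ⟨U, hUopen, hSU⟩ := hSopen
  obtain ⟨v, hvS⟩ := hSne
  have hvU : v ∈ U := by rw [hSU] at hvS; exact hvS.1
  have hvnorm : ‖v‖ = 1 := by have := hSsub hvS; simpa using this
  -- the reference open "shell" of the cone at scale 1
  set K : Set E3 := {z : E3 | 1 < ‖z‖ ∧ ‖z‖ < 2 ∧ ‖z‖⁻¹ • z ∈ U} with hKdef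
  have hKopen : IsOpen K := by
    have hs : IsOpen {z : E3 | 1 < ‖z‖ ∧ ‖z‖ < 2} :=
      (isOpen_lt continuous_const continuous_norm).inter
        (isOpen_lt continuous_norm continuous_const)
    have hg : ContinuousOn (fun z : E3 => ‖z‖⁻¹ • z) {z : E3 | 1 < ‖z‖ ∧ ‖z‖ < 2} := by
      refine ContinuousOn.smul (f := fun z : E3 => ‖z‖⁻¹) (g := id) ?_ continuousOn_id
      exact (continuous_norm.continuousOn).inv₀ fun z hz => ne_of_gt (lt_trans one_pos hz.1)
    have h2 := hg.isOpen_inter_preimage hs hUopen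
    have heq : K = {z : E3 | 1 < ‖z‖ ∧ ‖z‖ < 2} ∩ (fun z : E3 => ‖z‖⁻¹ • z) ⁻¹' U := by
      ext z
      simp only [hKdef, Set.mem_setOf_eq, Set.mem_inter_iff, Set.mem_preimage, and_assoc]
    rw [heq]
    exact h2
  have hKne : K.Nonempty := by
    refine ⟨(3/2 : ℝ) • v, ?_, ?_, ?_⟩
    · rw [norm_smul, hvnorm]; norm_num
    · rw [norm_smul, hvnorm]; norm_num
    · have h32 : ‖(3/2 : ℝ) • v‖ = 3/2 := by rw [norm_smul, hvnorm]; norm_num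
      rw [h32, smul_smul]
      norm_num [hvU]
  have hKvolpos : 0 < volume K := hKopen.measure_pos volume hKne
  have hKvolfin : volume K < ⊤ := by
    refine lt_of_le_of_lt (measure_mono (fun z hz => ?_)) (measure_ball_lt_top (x := (0:E3)) (r := 2))
    simpa using hz.2.1
  set c : ℝ := (volume K).toReal with hcdef
  have hc : 0 < c := ENNReal.toReal_pos hKvolpos.ne' hKvolfin.ne
  -- D is nonempty
  have hDne : D.Nonempty :=
    ⟨a + (r/2) • v, hcone ⟨(r/2) • v, ⟨r/2, v, by positivity, by linarith, hvS, rfl⟩, rfl⟩⟩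
  -- translated, rescaled copies of K sit inside D
  have hsub : ∀ δ : ℝ, 0 < δ → 2 * δ ≤ r → (fun z => a + z) '' (δ • K) ⊆ D := by
    rintro δ hδ hδr y hy
    obtain ⟨_, ⟨z, hz, rfl⟩, rfl⟩ := hy
    obtain ⟨hz1, hz2, hzU⟩ := hz
    have hzne : ‖z‖ ≠ 0 := ne_of_gt (lt_trans one_pos hz1)
    apply hcone
    refine ⟨δ • z, ⟨δ * ‖z‖, ‖z‖⁻¹ • z, by positivity, ?_, ?_, ?_⟩, rfl⟩
    · nlinarith
    · rw [hSU]
      refine ⟨hzU, ?_⟩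
      simp [norm_smul, abs_of_nonneg (norm_nonneg z), inv_mul_cancel₀ hzne]
    · rw [smul_smul, mul_assoc, mul_inv_cancel₀ hzne, mul_one]
  -- basic positivity facts
  have hfnonneg : ∀ (p : ℕ) (w : E3), ∀ y : E3, 0 ≤ 1 / (16 * π ^ 2 * ‖y - w‖ ^ p) := by
    intro p w y; positivity
  have hA0 : ∀ n, 0 ≤ A (x n) := fun n => by
    rw [hA]; exact setIntegral_nonneg hD fun y _ => hfnonneg 4 (x n) y
  have hB0 : ∀ n, 0 ≤ B (x n) := fun n => by
    rw [hB]; exact setIntegral_nonneg hD fun y _ => hfnonneg 2 (x n) y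
  set δ : ℕ → ℝ := fun n => ‖x n - a‖ with hδdef
  have haclD : a ∈ closure D := frontier_subset_closure haD
  have hδpos : ∀ n, 0 < δ n := by
    intro n
    rw [hδdef, norm_sub_pos_iff]
    exact fun h => (hx n) (h ▸ haclD)
  have hδ0 : Tendsto δ atTop (nhds 0) := tendsto_iff_norm_sub_tendsto_zero.1 hxa
  -- the main lower bound for A
  have hAlower : ∀ n, 2 * δ n ≤ r →
      c / (1296 * π ^ 2) * (δ n)⁻¹ ≤ A (x n) := by
    intro n hn
    set w := x n
    set d := δ n with hddef
    have hd : 0 < d := hδpos n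
    set T : Set E3 := (fun z => a + z) '' (d • K) with hTdef
    have hTsub : T ⊆ D := hsub d hd hn
    have hTopen : IsOpen T := by
      have h1 : IsOpen (d • K) := hKopen.smul₀ hd.ne'
      rw [hTdef, Set.image_add_left]
      exact h1.preimage (continuous_const.add continuous_id)
    have hTvol : volume T = ENNReal.ofReal (d ^ 3) * volume K := by
      rw [hTdef, Set.image_add_left, measure_preimage_add, Measure.addHaar_smul]
      congr 2
      simp [abs_of_nonneg (le_of_lt hd)]
    have hTvolReal : (volume T).toReal = d ^ 3 * c := by
      rw [hTvol, ENNReal.toReal_mul, ENNReal.toReal_ofReal (by positivity)]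
    have hTfin : volume T ≠ ⊤ := by
      rw [hTvol]
      exact (ENNReal.mul_lt_top ENNReal.ofReal_lt_top hKvolfin).ne
    have hIntD : IntegrableOn (fun y : E3 => 1 / (16 * π ^ 2 * ‖y - w‖ ^ 4)) D :=
      aux_integrableOn D hD hDb hDne w (hx n) 4
    -- pointwise lower bound on T
    have hpt : ∀ y ∈ T, 1 / (16 * π ^ 2 * (3 * d) ^ 4) ≤ 1 / (16 * π ^ 2 * ‖y - w‖ ^ 4) := by
      rintro y hyT
      obtain ⟨_, ⟨z, hz, rfl⟩, rfl⟩ := hyT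
      have hydist : ‖a + d • z - w‖ ≤ 3 * d := by
        have : a + d • z - w = (a - w) + d • z := by abel
        rw [this]
        calc ‖(a - w) + d • z‖ ≤ ‖a - w‖ + ‖d • z‖ := norm_add_le _ _
          _ = d + d * ‖z‖ := by
              rw [norm_smul, Real.norm_eq_abs, abs_of_nonneg hd.le, norm_sub_rev]
          _ ≤ 3 * d := by nlinarith [hz.2.1]
      have hypos : (0:ℝ) < ‖a + d • z - w‖ := by
        rw [norm_sub_pos_iff]
        intro h
        have hmem : a + d • z ∈ closure D :=
          subset_closure (hTsub ⟨d • z, ⟨z, hz, rfl⟩, rfl⟩)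
        rw [h] at hmem
        exact (hx n) hmem
      apply one_div_le_one_div_of_le (by positivity)
      have : ‖a + d • z - w‖ ^ 4 ≤ (3 * d) ^ 4 := pow_le_pow_left₀ hypos.le hydist 4
      nlinarith [sq_nonneg π, pi_pos]
    have step1 : 1 / (16 * π ^ 2 * (3 * d) ^ 4) * (volume T).toReal
        ≤ ∫ y in T, 1 / (16 * π ^ 2 * ‖y - w‖ ^ 4) :=
      by have := setIntegral_ge_of_const_le_real hTopen.measurableSet hTfin hpt (hIntD.mono_set hTsub)
         rwa [measureReal_def] at this
    have step2 : (∫ y in T, 1 / (16 * π ^ 2 * ‖y - w‖ ^ 4)) ≤ A w := by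
      rw [hA]
      exact setIntegral_mono_set hIntD
        (Filter.Eventually.of_forall fun y => hfnonneg 4 w y)
        (Filter.Eventually.of_forall hTsub)
    calc c / (1296 * π ^ 2) * (d)⁻¹
        = 1 / (16 * π ^ 2 * (3 * d) ^ 4) * (volume T).toReal := by
          rw [hTvolReal]
          field_simp
          ring
      _ ≤ ∫ y in T, 1 / (16 * π ^ 2 * ‖y - w‖ ^ 4) := step1
      _ ≤ A w := step2
  -- A (x n) → ∞
  have hδ0' : Tendsto δ atTop (nhdsWithin 0 (Set.Ioi 0)) :=
    tendsto_nhdsWithin_iff.2 ⟨hδ0, Filter.Eventually.of_forall fun n => hδpos n⟩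
  have hinv : Tendsto (fun n => c / (1296 * π ^ 2) * (δ n)⁻¹) atTop atTop :=
    (tendsto_inv_nhdsGT_zero.comp hδ0').const_mul_atTop (by positivity)
  have hAtop : Tendsto (fun n => A (x n)) atTop atTop := by
    apply tendsto_atTop_mono' atTop _ hinv
    have : ∀ᶠ n in atTop, δ n < r / 2 := hδ0.eventually_lt_const (by linarith)
    filter_upwards [this] with n hn
    exact hAlower n (by linarith)
  -- B is controlled by A plus a constant
  set C0 : ℝ := (volume D).toReal / (16 * π ^ 2) with hC0def
  have hC0 : 0 ≤ C0 := by positivity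
  have hBle : ∀ n, B (x n) ≤ A (x n) + C0 := by
    intro n
    set w := x n
    have hInt4 : IntegrableOn (fun y : E3 => 1 / (16 * π ^ 2 * ‖y - w‖ ^ 4)) D :=
      aux_integrableOn D hD hDb hDne w (hx n) 4
    have hInt2 : IntegrableOn (fun y : E3 => 1 / (16 * π ^ 2 * ‖y - w‖ ^ 2)) D :=
      aux_integrableOn D hD hDb hDne w (hx n) 2
    have hIntc : IntegrableOn (fun _ : E3 => 1 / (16 * π ^ 2)) D :=
      integrableOn_const hDb.measure_lt_top.ne
    have hpt : ∀ y ∈ D, 1 / (16 * π ^ 2 * ‖y - w‖ ^ 2)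
        ≤ 1 / (16 * π ^ 2 * ‖y - w‖ ^ 4) + 1 / (16 * π ^ 2) := by
      intro y _
      set t := ‖y - w‖ with htdef
      have ht : 0 ≤ t := norm_nonneg _
      rcases eq_or_lt_of_le ht with h0 | h0
      · rw [← h0]
        norm_num
        positivity
      · have e1 : 1 / (16 * π ^ 2 * t ^ 2) = t ^ 2 / (16 * π ^ 2 * t ^ 4) := by
          field_simp
        have e2 : 1 / (16 * π ^ 2 * t ^ 4) + 1 / (16 * π ^ 2)
            = (1 + t ^ 4) / (16 * π ^ 2 * t ^ 4) := by
          field_simp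
        rw [e1, e2]
        exact (div_le_div_iff_of_pos_right (by positivity)).2 (by nlinarith [sq_nonneg (t ^ 2 - 1)])
    calc B w ≤ ∫ y in D, (1 / (16 * π ^ 2 * ‖y - w‖ ^ 4) + 1 / (16 * π ^ 2)) := by
          rw [hB]
          exact setIntegral_mono_on hInt2 (hInt4.add hIntc) hD hpt
      _ = A w + C0 := by
          rw [integral_add hInt4 hIntc, hA, setIntegral_const, hC0def, smul_eq_mul, measureReal_def]
          ring
  -- conclusion
  have hsq : Tendsto (fun n => Real.sqrt (A (x n))) atTop atTop := by
    rw [tendsto_atTop]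
    intro b
    filter_upwards [hAtop.eventually_ge_atTop (b ^ 2)] with n hn
    calc b ≤ |b| := le_abs_self b
      _ = Real.sqrt (b ^ 2) := (Real.sqrt_sq_eq_abs b).symm
      _ ≤ _ := Real.sqrt_le_sqrt hn
  apply tendsto_atTop_mono' atTop _ (hsq.atTop_div_const (by positivity : (0:ℝ) < Real.sqrt 3))
  filter_upwards [hAtop.eventually_ge_atTop (max C0 1)] with n hn
  set An := A (x n)
  set Bn := B (x n)
  have hAn1 : (1:ℝ) ≤ An := le_trans (le_max_right _ _) hn
  have hAnC : C0 ≤ An := le_trans (le_max_left _ _) hn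
  have hsum : An + Bn ≤ 3 * An := by
    have := hBle n
    nlinarith
  have hsumpos : (0:ℝ) < An + Bn := by nlinarith [hB0 n]
  have h1 : Real.sqrt (An + Bn) ≤ Real.sqrt 3 * Real.sqrt An := by
    rw [← Real.sqrt_mul (by norm_num)]
    exact Real.sqrt_le_sqrt hsum
  have h2 : An / (Real.sqrt 3 * Real.sqrt An) ≤ An / Real.sqrt (An + Bn) := by
    apply div_le_div_of_nonneg_left (by linarith) (Real.sqrt_pos.2 hsumpos) h1
  refine le_trans (le_of_eq ?_) h2
  have hsA : Real.sqrt An > 0 := Real.sqrt_pos.2 (by linarith)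
  rw [eq_comm]
  rw [show An = Real.sqrt An * Real.sqrt An from (Real.mul_self_sqrt (by linarith)).symm]
  field_simp
  rw [Real.sqrt_sq hsA.le]
end
end
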